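/- Let k ≥ 1 be an integer and work in the field of rational functions ℚ(x,y). Define five pairs (w₁,w₂): (y^k/x, y), (1/y, 1/(y^k·x)), (y^k·x, 1/y), (y, x/y^{k+1}), (y^{k+1}/x, x/y^k). Then ∑ over these five pairs of (w₁ + w₂)·w₁·w₂ / ((1 − w₁)(1 − w₂)) equals (1/(x·y^k))·( (∑_{j=0}^{2k} y^j) + x·y^{k−1}·(2y + 1) ) − x·(∑_{j=0}^{2k−1} y^{j−k}). -/

import Mathlib

open MvPolynomial Finset

set_option maxHeartbeats 8000000 in
/-- Atiyah–Bott fixed point computation: in the field ℚ(x,y) (modeled as the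
fraction field of `MvPolynomial (Fin 2) ℚ`, with `x`, `y` the images of the two
variables), summing `(w₁ + w₂)·w₁·w₂ / ((1 − w₁)(1 − w₂))` over the five weight
pairs `(y^k/x, y)`, `(1/y, 1/(y^k·x))`, `(y^k·x, 1/y)`, `(y, x/y^{k+1})`,
`(y^{k+1}/x, x/y^k)` gives
`(1/(x·y^k))·((∑_{j=0}^{2k} y^j) + x·y^{k−1}·(2y + 1)) − x·(∑_{j=0}^{2k−1} y^{j−k})`. -/
theorem atiyah_bott_index_even (k : ℕ) (hk : 1 ≤ k) :
    let K := FractionRing (MvPolynomial (Fin 2) ℚ)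
    let x : K := algebraMap (MvPolynomial (Fin 2) ℚ) K (X 0)
    let y : K := algebraMap (MvPolynomial (Fin 2) ℚ) K (X 1)
    let t : K → K → K := fun w₁ w₂ => (w₁ + w₂) * (w₁ * w₂) / ((1 - w₁) * (1 - w₂))
    t (y ^ k / x) y + t (1 / y) (1 / (y ^ k * x)) + t (y ^ k * x) (1 / y) +
        t y (x / y ^ (k + 1)) + t (y ^ (k + 1) / x) (x / y ^ k) =
      (1 / (x * y ^ k)) *
          ((∑ j ∈ Finset.range (2 * k + 1), y ^ j) + x * y ^ (k - 1) * (2 * y + 1)) -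
        x * ∑ j ∈ Finset.range (2 * k), y ^ ((j : ℤ) - (k : ℤ)) := by
  intro K x y t
  obtain ⟨m, rfl⟩ : ∃ m, k = m + 1 := ⟨k - 1, (Nat.succ_pred_eq_of_pos hk).symm⟩
  have inj := IsFractionRing.injective (MvPolynomial (Fin 2) ℚ) K
  have key : ∀ p : MvPolynomial (Fin 2) ℚ, p ≠ 0 →
      algebraMap (MvPolynomial (Fin 2) ℚ) K p ≠ 0 := fun p hp =>
    (IsFractionRing.to_map_eq_zero_iff (K := K)).not.mpr hp
  have e0 : (fun i : Fin 2 => if i = 0 then (1:ℚ) else 0) 0 = 1 := rfl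
  have hx : x ≠ 0 := key _ (by
    intro h
    have := congrArg (eval (fun i : Fin 2 => if i = 0 then (1:ℚ) else 0)) h
    simp at this)
  have hy : y ≠ 0 := key _ (by
    intro h
    have := congrArg (eval (fun _ : Fin 2 => (1:ℚ))) h
    simp at this)
  have hy1 : y - 1 ≠ 0 := by
    have : y - 1 = algebraMap (MvPolynomial (Fin 2) ℚ) K (X 1 - 1) := by
      simp [map_sub, y]
    rw [this]
    refine key _ ?_
    intro h
    have := congrArg (eval (fun _ : Fin 2 => (0:ℚ))) h
    simp at this
  have h1 : x - y ^ (m+1) ≠ 0 := by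
    have : x - y ^ (m+1) = algebraMap (MvPolynomial (Fin 2) ℚ) K (X 0 - X 1 ^ (m+1)) := by
      simp [map_sub, map_pow, x, y]
    rw [this]
    refine key _ ?_
    intro h
    have := congrArg (eval (fun i : Fin 2 => if i = 0 then (1:ℚ) else 0)) h
    simp [zero_pow] at this
  have h2 : y ^ (m+1) * x - 1 ≠ 0 := by
    have : y ^ (m+1) * x - 1 = algebraMap (MvPolynomial (Fin 2) ℚ) K (X 1 ^ (m+1) * X 0 - 1) := by
      simp [map_sub, map_pow, map_mul, x, y]
    rw [this]
    refine key _ ?_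
    intro h
    have := congrArg (eval (fun _ : Fin 2 => (0:ℚ))) h
    simp [zero_pow] at this
  have h3 : y ^ (m+1+1) - x ≠ 0 := by
    have : y ^ (m+1+1) - x = algebraMap (MvPolynomial (Fin 2) ℚ) K (X 1 ^ (m+1+1) - X 0) := by
      simp [map_sub, map_pow, x, y]
    rw [this]
    refine key _ ?_
    intro h
    have := congrArg (eval (fun i : Fin 2 => if i = 0 then (1:ℚ) else 0)) h
    simp [zero_pow] at this
  have hy1' : y ≠ 1 := fun h => hy1 (by rw [h]; ring)
  have hgs : ∀ n : ℕ, (∑ j ∈ Finset.range n, y ^ j) = (y ^ n - 1) / (y - 1) :=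
    fun n => geom_sum_eq hy1' n
  have hz : (∑ j ∈ Finset.range (2 * (m+1)), y ^ ((j : ℤ) - ((m+1 : ℕ) : ℤ)))
      = (∑ j ∈ Finset.range (2 * (m+1)), y ^ j) / y ^ (m+1) := by
    rw [Finset.sum_div]
    refine Finset.sum_congr rfl fun j _ => ?_
    rw [zpow_sub₀ hy, zpow_natCast, zpow_natCast]
  rw [hz, hgs, hgs]
  have hpow : ∀ n : ℕ, y ^ n ≠ 0 := fun n => pow_ne_zero n hy
  simp only [t]
  have hm : (m + 1) - 1 = m := rfl
  rw [hm]
  have e1 : y ^ (m+1) = y ^ m * y := by ring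
  have e2 : y ^ (m+1+1) = y ^ m * y ^ 2 := by ring
  have e3 : y ^ (2*(m+1)+1) = (y ^ m)^2 * y ^ 3 := by ring
  have e4 : y ^ (2*(m+1)) = (y ^ m)^2 * y ^ 2 := by ring
  rw [e1] at h1 h2 ⊢
  rw [e2] at h3
  rw [e2, e3, e4]
  have ha : y ^ m ≠ 0 := pow_ne_zero m hy
  generalize y ^ m = a at *
  simp only [K] at *
  have h1' : a * y - x ≠ 0 := fun h => h1 (by linear_combination -h)
  have h2' : (1:K) - a * y * x ≠ 0 := fun h => h2 (by linear_combination -h)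
  have h3' : x - a * y ^ 2 ≠ 0 := fun h => h3 (by linear_combination -h)
  have hy1'' : (1:K) - y ≠ 0 := fun h => hy1 (by linear_combination -h)
  have hayx : a * y * x ≠ 0 := mul_ne_zero (mul_ne_zero ha hy) hx
  have hay2 : a * y ^ 2 ≠ 0 := mul_ne_zero ha (pow_ne_zero 2 hy)
  have hay : a * y ≠ 0 := mul_ne_zero ha hy
  have d1 : (1:K) - a * y / x = (x - a * y) / x := one_sub_div hx
  have d2 : (1:K) - 1 / y = (y - 1) / y := one_sub_div hy
  have d3 : (1:K) - 1 / (a * y * x) = (a * y * x - 1) / (a * y * x) := one_sub_div hayx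
  have d4 : (1:K) - x / (a * y ^ 2) = (a * y ^ 2 - x) / (a * y ^ 2) := one_sub_div hay2
  have d5 : (1:K) - a * y ^ 2 / x = (x - a * y ^ 2) / x := one_sub_div hx
  have d6 : (1:K) - x / (a * y) = (a * y - x) / (a * y) := one_sub_div hay
  have n1 : (1:K) - a * y / x ≠ 0 := by rw [d1]; exact div_ne_zero h1 hx
  have n2 : (1:K) - 1 / y ≠ 0 := by rw [d2]; exact div_ne_zero hy1 hy
  have n3 : (1:K) - 1 / (a * y * x) ≠ 0 := by rw [d3]; exact div_ne_zero h2 hayx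
  have n4 : (1:K) - x / (a * y ^ 2) ≠ 0 := by rw [d4]; exact div_ne_zero h3 hay2
  have n5 : (1:K) - a * y ^ 2 / x ≠ 0 := by rw [d5]; exact div_ne_zero h3' hx
  have n6 : (1:K) - x / (a * y) ≠ 0 := by rw [d6]; exact div_ne_zero h1' hay
  set D : K := x * y ^ 2 * a * (y - 1) * (x - a * y) * (a * y * x - 1) * (a * y ^ 2 - x) with hDdef
  have hD : D ≠ 0 :=
    mul_ne_zero (mul_ne_zero (mul_ne_zero (mul_ne_zero (mul_ne_zero
      (mul_ne_zero hx (pow_ne_zero 2 hy)) ha) hy1) h1) h2) h3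
  have t1 : (a * y / x + y) * (a * y / x * y) / ((1 - a * y / x) * (1 - y)) =
      (a * y + x * y) * (a * y ^ 2) * (-(y ^ 2 * a * (a * y * x - 1) * (a * y ^ 2 - x))) / D := by
    rw [hDdef]
    simp only [K]
    field_simp
    ring
  have t2 : (1 / y + 1 / (a * y * x)) * (1 / y * (1 / (a * y * x))) /
      ((1 - 1 / y) * (1 - 1 / (a * y * x))) =
      (a * y * x + y) * ((x - a * y) * (a * y ^ 2 - x)) / D := by
    rw [div_eq_div_iff (mul_ne_zero n2 n3) hD, hDdef]
    simp only [K]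
    field_simp
  have t3 : (a * y * x + 1 / y) * (a * y * x * (1 / y)) / ((1 - a * y * x) * (1 - 1 / y)) =
      (a * y ^ 2 * x + 1) * (a * y * x) * (-(x * y * a * (x - a * y) * (a * y ^ 2 - x))) / D := by
    rw [hDdef]
    simp only [K]
    field_simp
    ring
  have t4 : (y + x / (a * y ^ 2)) * (y * (x / (a * y ^ 2))) / ((1 - y) * (1 - x / (a * y ^ 2))) =
      (a * y ^ 3 + x) * (x * y) * (-(x * (x - a * y) * (a * y * x - 1))) / D := by
    rw [div_eq_div_iff (mul_ne_zero hy1'' n4) hD, hDdef]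
    simp only [K]
    field_simp
    ring
  have t5 : (a * y ^ 2 / x + x / (a * y)) * (a * y ^ 2 / x * (x / (a * y))) /
      ((1 - a * y ^ 2 / x) * (1 - x / (a * y))) =
      (a ^ 2 * y ^ 3 + x ^ 2) * (a * x * y ^ 2) * (y * (y - 1) * (a * y * x - 1)) / D := by
    rw [hDdef]
    simp only [K]
    field_simp
    ring
  rw [t1, t2, t3, t4, t5, ← add_div, ← add_div, ← add_div,
    ← add_div, div_eq_iff hD, hDdef]
  field_simp
  ring
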